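/- arXiv:2108.01771 — 4 statements merged into one kernel-verified Lean document; each statement's English description precedes it below -/
import Mathlib

section
/- Let Y be a real-valued random variable on a probability space (Ω, F, P) with E[|Y|] < ∞, and let α ∈ (0, 1). Then s = VaR_α(Y) attains the infimum defining CVaR_α(Y); consequently, CVaR_α(Y) = VaR_α(Y) + (1/α)·E[max(Y − VaR_α(Y), 0)]. -/
open MeasureTheory

/-- Conditional Value-at-Risk at level `α ∈ (0,1]` of a random cost `Y`:
`CVaR_α(Y) := inf_{s ∈ ℝ} ( s + (1/α)·E[max(Y − s, 0)] )`. -/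
noncomputable def CVaR {Ω : Type*} [MeasurableSpace Ω] (P : Measure Ω) (α : ℝ)
    (Y : Ω → ℝ) : ℝ :=
  ⨅ s : ℝ, (s + (1 / α) * ∫ ω, max (Y ω - s) 0 ∂P)

/-- Value-at-Risk at level `α ∈ (0,1)`: the left-side `(1−α)`-quantile
`VaR_α(Y) := inf{ z ∈ ℝ : P(Y ≤ z) ≥ 1 − α }`. -/
noncomputable def VaR {Ω : Type*} [MeasurableSpace Ω] (P : Measure Ω) (α : ℝ)
    (Y : Ω → ℝ) : ℝ :=
  sInf {z : ℝ | ENNReal.ofReal (1 - α) ≤ P {ω | Y ω ≤ z}}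

section aux

variable {Ω : Type*} [MeasurableSpace Ω] (P : Measure Ω) [IsProbabilityMeasure P]

lemma var_mem_aux (Y : Ω → ℝ) (hYm : Measurable Y) (α : ℝ) (hα : α ∈ Set.Ioo (0 : ℝ) 1) :
    ENNReal.ofReal (1 - α) ≤ P {ω | Y ω ≤ VaR P α Y} ∧
    P {ω | Y ω < VaR P α Y} ≤ ENNReal.ofReal (1 - α) := by
  set c := ENNReal.ofReal (1 - α) with hc
  set S := {z : ℝ | c ≤ P {ω | Y ω ≤ z}} with hS
  have hc1 : c < 1 := by
    rw [hc]
    calc ENNReal.ofReal (1 - α) < ENNReal.ofReal 1 :=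
          (ENNReal.ofReal_lt_ofReal_iff one_pos).2 (by linarith [hα.1])
      _ = 1 := ENNReal.ofReal_one
  have hc0 : 0 < c := ENNReal.ofReal_pos.2 (by linarith [hα.2])
  -- S nonempty
  have hSne : S.Nonempty := by
    have hmono : Monotone (fun n : ℕ => {ω | Y ω ≤ (n : ℝ)}) := by
      intro m n hmn ω h
      simp only [Set.mem_setOf_eq] at h ⊢
      exact le_trans h (by exact_mod_cast hmn)
    have hT := tendsto_measure_iUnion_atTop (μ := P) hmono
    have hU : (⋃ n : ℕ, {ω | Y ω ≤ (n : ℝ)}) = Set.univ := by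
      ext ω; simp only [Set.mem_iUnion, Set.mem_setOf_eq, Set.mem_univ, iff_true]
      exact exists_nat_ge (Y ω)
    simp only [Function.comp_def, hU, measure_univ] at hT
    obtain ⟨n, hn⟩ := (hT.eventually (eventually_ge_nhds hc1)).exists
    exact ⟨n, hn⟩
  -- S bounded below
  have hSbdd : BddBelow S := by
    have hanti : Antitone (fun n : ℕ => {ω | Y ω ≤ -(n : ℝ)}) := by
      intro m n hmn ω h
      simp only [Set.mem_setOf_eq] at h ⊢
      have : -(n : ℝ) ≤ -(m : ℝ) := by exact_mod_cast neg_le_neg (Nat.cast_le.2 hmn)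
      linarith
    have hT := tendsto_measure_iInter_atTop (μ := P) (s := fun n : ℕ => {ω | Y ω ≤ -(n : ℝ)})
      (fun n => (measurableSet_le hYm measurable_const).nullMeasurableSet) hanti
      ⟨0, measure_ne_top P _⟩
    have hI : (⋂ n : ℕ, {ω | Y ω ≤ -(n : ℝ)}) = ∅ := by
      ext ω; simp only [Set.mem_iInter, Set.mem_setOf_eq, Set.mem_empty_iff_false, iff_false]
      push_neg
      obtain ⟨n, hn⟩ := exists_nat_gt (-(Y ω))
      exact ⟨n, by linarith⟩
    simp only [Function.comp_def, hI, measure_empty] at hT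
    obtain ⟨n, hn⟩ := (hT.eventually (eventually_lt_nhds hc0)).exists
    refine ⟨-(n : ℝ), fun z hz => ?_⟩
    by_contra hlt
    push_neg at hlt
    exact absurd (le_trans hz (measure_mono (fun ω h => le_trans h hlt.le))) (not_le.2 hn)
  set t := sInf S with ht
  constructor
  · -- t ∈ S
    have hmemn : ∀ n : ℕ, c ≤ P {ω | Y ω ≤ t + 1 / (n + 1)} := by
      intro n
      have hpos : (0 : ℝ) < 1 / (n + 1) := by positivity
      obtain ⟨z, hzS, hzlt⟩ := (csInf_lt_iff hSbdd hSne).1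
        (show t < t + 1 / (n+1) by linarith)
      exact le_trans hzS (measure_mono (fun ω h => le_trans h hzlt.le))
    have hanti : Antitone (fun n : ℕ => {ω | Y ω ≤ t + 1 / (n + 1)}) := by
      intro m n hmn ω h
      simp only [Set.mem_setOf_eq] at h ⊢
      have h1 : (m : ℝ) + 1 ≤ (n : ℝ) + 1 := by exact_mod_cast Nat.succ_le_succ hmn
      have h2 : (0:ℝ) < (m:ℝ) + 1 := by positivity
      have := one_div_le_one_div_of_le h2 h1
      linarith
    have hT := tendsto_measure_iInter_atTop (μ := P)
      (s := fun n : ℕ => {ω | Y ω ≤ t + 1 / (n + 1)})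
      (fun n => (measurableSet_le hYm measurable_const).nullMeasurableSet) hanti
      ⟨0, measure_ne_top P _⟩
    have hI : (⋂ n : ℕ, {ω | Y ω ≤ t + 1 / (n + 1)}) = {ω | Y ω ≤ t} := by
      ext ω
      simp only [Set.mem_iInter, Set.mem_setOf_eq]
      constructor
      · intro h
        by_contra hgt
        push_neg at hgt
        obtain ⟨n, hn⟩ := exists_nat_one_div_lt (show (0:ℝ) < Y ω - t by linarith)
        have := h n
        linarith
      · intro h n
        have : (0:ℝ) < 1 / (n+1) := by positivity
        linarith
    simp only [Function.comp_def, hI] at hT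
    exact ge_of_tendsto hT (Filter.Eventually.of_forall hmemn)
  · -- P {Y < t} ≤ c
    have hnot : ∀ n : ℕ, P {ω | Y ω ≤ t - 1 / (n + 1)} ≤ c := by
      intro n
      have hpos : (0 : ℝ) < 1 / (n + 1) := by positivity
      by_contra h
      push_neg at h
      have hmem' : t - 1/(n+1) ∈ S := h.le
      have := csInf_le hSbdd hmem'
      rw [← ht] at this
      linarith
    have hmono : Monotone (fun n : ℕ => {ω | Y ω ≤ t - 1 / (n + 1)}) := by
      intro m n hmn ω h
      simp only [Set.mem_setOf_eq] at h ⊢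
      have h1 : (m : ℝ) + 1 ≤ (n : ℝ) + 1 := by exact_mod_cast Nat.succ_le_succ hmn
      have h2 : (0:ℝ) < (m:ℝ) + 1 := by positivity
      have := one_div_le_one_div_of_le h2 h1
      linarith
    have hT := tendsto_measure_iUnion_atTop (μ := P) hmono
    have hU : (⋃ n : ℕ, {ω | Y ω ≤ t - 1 / (n + 1)}) = {ω | Y ω < t} := by
      ext ω
      simp only [Set.mem_iUnion, Set.mem_setOf_eq]
      constructor
      · rintro ⟨n, hn⟩
        have : (0:ℝ) < 1/(n+1) := by positivity
        linarith
      · intro h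
        obtain ⟨n, hn⟩ := exists_nat_one_div_lt (show (0:ℝ) < t - Y ω by linarith)
        exact ⟨n, by linarith⟩
    simp only [Function.comp_def, hU] at hT
    exact le_of_tendsto hT (Filter.Eventually.of_forall hnot)

lemma main_aux (Y : Ω → ℝ) (hYm : Measurable Y) (hY : Integrable Y P)
    (α : ℝ) (hα : α ∈ Set.Ioo (0 : ℝ) 1) :
    CVaR P α Y = VaR P α Y + (1 / α) * ∫ ω, max (Y ω - VaR P α Y) 0 ∂P := by
  obtain ⟨hmem, hlt⟩ := var_mem_aux P Y hYm α hα
  set t := VaR P α Y with ht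
  have hα0 := hα.1
  have hα1 := hα.2
  have hgt_meas : MeasurableSet {ω | t < Y ω} := measurableSet_lt measurable_const hYm
  have hge_meas : MeasurableSet {ω | t ≤ Y ω} := measurableSet_le measurable_const hYm
  -- real-valued tail probabilities
  set p := (P {ω | t < Y ω}).toReal with hpdef
  set q := (P {ω | t ≤ Y ω}).toReal with hqdef
  have hle_toReal : 1 - α ≤ (P {ω | Y ω ≤ t}).toReal := by
    have := ENNReal.toReal_mono (measure_ne_top P _) hmem
    rwa [ENNReal.toReal_ofReal (by linarith)] at this
  have hlt_toReal : (P {ω | Y ω < t}).toReal ≤ 1 - α := by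
    have := ENNReal.toReal_mono ENNReal.ofReal_ne_top hlt
    rwa [ENNReal.toReal_ofReal (by linarith)] at this
  have hp : p ≤ α := by
    have hcompl : {ω | t < Y ω} = {ω | Y ω ≤ t}ᶜ := by ext ω; simp [not_le]
    have h1 := measure_compl (s := {ω | Y ω ≤ t}) (measurableSet_le hYm measurable_const) (measure_ne_top P _)
    rw [hpdef, hcompl, h1, measure_univ,
      ENNReal.toReal_sub_of_le prob_le_one ENNReal.one_ne_top, ENNReal.toReal_one]
    linarith
  have hq : α ≤ q := by
    have hcompl : {ω | t ≤ Y ω} = {ω | Y ω < t}ᶜ := by ext ω; simp [not_lt]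
    have h1 := measure_compl (s := {ω | Y ω < t}) (measurableSet_lt hYm measurable_const) (measure_ne_top P _)
    rw [hqdef, hcompl, h1, measure_univ,
      ENNReal.toReal_sub_of_le prob_le_one ENNReal.one_ne_top, ENNReal.toReal_one]
    linarith
  -- integrability
  have hint : ∀ s : ℝ, Integrable (fun ω => max (Y ω - s) 0) P := fun s =>
    (hY.sub (integrable_const s)).pos_part
  set f : ℝ → ℝ := fun s => s + (1 / α) * ∫ ω, max (Y ω - s) 0 ∂P with hf
  have hmin : ∀ s : ℝ, f t ≤ f s := by
    intro s
    rcases le_total t s with hst | hst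
    · -- s ≥ t : use indicator on {t < Y}
      have hptwise : ∀ ω, max (Y ω - t) 0 - Set.indicator {ω | t < Y ω} (fun _ => s - t) ω
          ≤ max (Y ω - s) 0 := by
        intro ω
        by_cases h : t < Y ω
        · rw [Set.indicator_of_mem (show ω ∈ {ω | t < Y ω} from h), max_eq_left (by linarith : (0:ℝ) ≤ Y ω - t)]
          have := le_max_left (Y ω - s) (0:ℝ)
          have := le_max_right (Y ω - s) (0:ℝ)
          linarith
        · push_neg at h
          rw [Set.indicator_of_notMem (show ω ∉ {ω | t < Y ω} by simpa using h),
            max_eq_right (by linarith : Y ω - t ≤ 0)]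
          have := le_max_right (Y ω - s) (0:ℝ)
          linarith
      have hind : Integrable (Set.indicator {ω | t < Y ω} (fun _ => s - t)) P :=
        (integrable_const (s - t)).indicator hgt_meas
      have hIle : ∫ ω, (max (Y ω - t) 0 - Set.indicator {ω | t < Y ω} (fun _ => s - t) ω) ∂P
          ≤ ∫ ω, max (Y ω - s) 0 ∂P :=
        integral_mono ((hint t).sub hind) (hint s) hptwise
      have hIsub : ∫ ω, (max (Y ω - t) 0 - Set.indicator {ω | t < Y ω} (fun _ => s - t) ω) ∂P
          = (∫ ω, max (Y ω - t) 0 ∂P) - (s - t) * p := by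
        rw [integral_sub (hint t) hind, integral_indicator_const _ hgt_meas, smul_eq_mul, hpdef, measureReal_def]
        ring
      have hIle' : (∫ ω, max (Y ω - t) 0 ∂P) - (s - t) * p ≤ ∫ ω, max (Y ω - s) 0 ∂P := by
        rw [← hIsub]; exact hIle
      have hkey : (1/α) * ((s - t) * p) ≤ s - t := by
        rw [div_mul_eq_mul_div, one_mul, div_le_iff₀ hα0]
        nlinarith [ENNReal.toReal_nonneg (a := P {ω | t < Y ω})]
      have h1α : (0:ℝ) < 1/α := by positivity
      simp only [hf]
      nlinarith [mul_le_mul_of_nonneg_left hIle' h1α.le]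
    · -- s ≤ t : use indicator on {t ≤ Y}
      have hptwise : ∀ ω, max (Y ω - t) 0 - Set.indicator {ω | t ≤ Y ω} (fun _ => s - t) ω
          ≤ max (Y ω - s) 0 := by
        intro ω
        by_cases h : t ≤ Y ω
        · rw [Set.indicator_of_mem (show ω ∈ {ω | t ≤ Y ω} from h), max_eq_left (by linarith : (0:ℝ) ≤ Y ω - t),
            max_eq_left (by linarith : (0:ℝ) ≤ Y ω - s)]
          linarith
        · push_neg at h
          rw [Set.indicator_of_notMem (show ω ∉ {ω | t ≤ Y ω} by simpa using h.not_ge),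
            max_eq_right (by linarith : Y ω - t ≤ 0)]
          have := le_max_right (Y ω - s) (0:ℝ)
          linarith
      have hind : Integrable (Set.indicator {ω | t ≤ Y ω} (fun _ => s - t)) P :=
        (integrable_const (s - t)).indicator hge_meas
      have hIle : ∫ ω, (max (Y ω - t) 0 - Set.indicator {ω | t ≤ Y ω} (fun _ => s - t) ω) ∂P
          ≤ ∫ ω, max (Y ω - s) 0 ∂P :=
        integral_mono ((hint t).sub hind) (hint s) hptwise
      have hIsub : ∫ ω, (max (Y ω - t) 0 - Set.indicator {ω | t ≤ Y ω} (fun _ => s - t) ω) ∂P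
          = (∫ ω, max (Y ω - t) 0 ∂P) - (s - t) * q := by
        rw [integral_sub (hint t) hind, integral_indicator_const _ hge_meas, smul_eq_mul, hqdef, measureReal_def]
        ring
      have hIle' : (∫ ω, max (Y ω - t) 0 ∂P) - (s - t) * q ≤ ∫ ω, max (Y ω - s) 0 ∂P := by
        rw [← hIsub]; exact hIle
      have hq1 : q ≤ 1 := by
        rw [hqdef]
        exact ENNReal.toReal_le_of_le_ofReal one_pos.le (by simpa using prob_le_one)
      have hkey : (1/α) * ((s - t) * q) ≤ s - t := by
        rw [div_mul_eq_mul_div, one_mul, div_le_iff₀ hα0]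
        nlinarith
      have h1α : (0:ℝ) < 1/α := by positivity
      simp only [hf]
      nlinarith [mul_le_mul_of_nonneg_left hIle' h1α.le]
  have hbdd : BddBelow (Set.range f) := ⟨f t, by rintro _ ⟨s, rfl⟩; exact hmin s⟩
  have : CVaR P α Y = ⨅ s, f s := rfl
  rw [this]
  exact le_antisymm (ciInf_le hbdd t) (le_ciInf hmin)

end aux

/-- For an integrable `Y` and `α ∈ (0, 1)`, the choice `s = VaR_α(Y)` attains the infimum
defining `CVaR_α(Y)`, so that
`CVaR_α(Y) = VaR_α(Y) + (1/α)·E[max(Y − VaR_α(Y), 0)]`. -/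
theorem stmt_11 {Ω : Type*} [MeasurableSpace Ω] (P : Measure Ω) [IsProbabilityMeasure P]
    (Y : Ω → ℝ) (hY : Integrable Y P) (α : ℝ) (hα : α ∈ Set.Ioo (0 : ℝ) 1) :
    CVaR P α Y = VaR P α Y + (1 / α) * ∫ ω, max (Y ω - VaR P α Y) 0 ∂P := by
  obtain ⟨Z, hZm, hZae⟩ := hY.aestronglyMeasurable
  have hZae' : Y =ᵐ[P] Z := hZae
  have hZint : Integrable Z P := hY.congr hZae'
  have hsets : ∀ z : ℝ, P {ω | Y ω ≤ z} = P {ω | Z ω ≤ z} := by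
    intro z
    refine measure_congr ?_
    filter_upwards [hZae'] with ω h
    show (Y ω ≤ z) = (Z ω ≤ z)
    rw [h]
  have hVaR : VaR P α Y = VaR P α Z := by
    unfold VaR
    congr 1
    ext z
    simp only [Set.mem_setOf_eq, hsets z]
  have hints : ∀ s : ℝ, (∫ ω, max (Y ω - s) 0 ∂P) = ∫ ω, max (Z ω - s) 0 ∂P := by
    intro s
    refine integral_congr_ae ?_
    filter_upwards [hZae'] with ω h
    rw [h]
  have hCVaR : CVaR P α Y = CVaR P α Z := by
    unfold CVaR
    congr 1
    ext s
    rw [hints s]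
  rw [hCVaR, hVaR, hints]
  exact main_aux P Z hZm.measurable hZint α hα
end

section
/- Let Y be a real-valued random variable on a probability space (Ω, F, P) with E[|Y|] < ∞, and let α ∈ (0, 1]. Then CVaR_α(Y) = (1/α)·∫_{1−α}^{1} VaR_{1−ℓ}(Y) dℓ, where the integral is over ℓ ∈ (1−α, 1). -/
open MeasureTheory

open Set Filter ProbabilityTheory
open scoped Topology

section QuantileAux

/-- Left-continuous quantile function of a measure on `ℝ`. -/
noncomputable def qtl (μ : Measure ℝ) (ℓ : ℝ) : ℝ := sInf {z | ℓ ≤ cdf μ z}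

variable {μ : Measure ℝ} [IsProbabilityMeasure μ]

lemma qtl_set_nonempty {ℓ : ℝ} (hℓ : ℓ < 1) : {z | ℓ ≤ cdf μ z}.Nonempty := by
  obtain ⟨x, hx⟩ := ((tendsto_cdf_atTop μ).eventually (eventually_ge_nhds hℓ)).exists
  exact ⟨x, hx⟩

lemma qtl_bddBelow {ℓ : ℝ} (hℓ : 0 < ℓ) : BddBelow {z | ℓ ≤ cdf μ z} := by
  obtain ⟨x, hx⟩ := ((tendsto_cdf_atBot μ).eventually (eventually_lt_nhds hℓ)).exists
  refine ⟨x, fun z hz => ?_⟩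
  by_contra h
  push_neg at h
  exact absurd (hz.trans (monotone_cdf μ h.le)) (not_le.mpr hx)

lemma le_cdf_qtl {ℓ : ℝ} (hℓ : ℓ ∈ Ioo (0:ℝ) 1) : ℓ ≤ cdf μ (qtl μ ℓ) := by
  have hne := qtl_set_nonempty (μ := μ) hℓ.2
  have hbd := qtl_bddBelow (μ := μ) hℓ.1
  have hrc : Tendsto (cdf μ) (𝓝[>] (qtl μ ℓ)) (𝓝 (cdf μ (qtl μ ℓ))) :=
    ((cdf μ).right_continuous _).tendsto.mono_left (nhdsWithin_mono _ Ioi_subset_Ici_self)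
  refine ge_of_tendsto hrc ?_
  filter_upwards [self_mem_nhdsWithin] with z hz
  obtain ⟨w, hw, hwz⟩ := exists_lt_of_csInf_lt hne hz
  exact hw.trans (monotone_cdf μ hwz.le)

lemma qtl_le_iff {ℓ : ℝ} (hℓ : ℓ ∈ Ioo (0:ℝ) 1) {z : ℝ} :
    qtl μ ℓ ≤ z ↔ ℓ ≤ cdf μ z := by
  constructor
  · exact fun h => (le_cdf_qtl hℓ).trans (monotone_cdf μ h)
  · exact fun h => csInf_le (qtl_bddBelow hℓ.1) h

lemma qtl_monotoneOn : MonotoneOn (qtl μ) (Ioo (0:ℝ) 1) := by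
  intro a ha b hb hab
  exact (qtl_le_iff ha).mpr (hab.trans (le_cdf_qtl hb))

lemma qtl_aemeasurable : AEMeasurable (qtl μ) (volume.restrict (Ioo (0:ℝ) 1)) :=
  aemeasurable_restrict_of_monotoneOn measurableSet_Ioo qtl_monotoneOn

instance : IsProbabilityMeasure (volume.restrict (Ioo (0:ℝ) 1)) :=
  ⟨by simp [Real.volume_Ioo]⟩

lemma qtl_map : (volume.restrict (Ioo (0:ℝ) 1)).map (qtl μ) = μ := by
  have hqm := qtl_aemeasurable (μ := μ)
  haveI : IsProbabilityMeasure ((volume.restrict (Ioo (0:ℝ) 1)).map (qtl μ)) :=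
    Measure.isProbabilityMeasure_map hqm
  refine Measure.ext_of_Iic _ _ (fun z => ?_)
  rw [Measure.map_apply_of_aemeasurable hqm measurableSet_Iic,
    Measure.restrict_apply' measurableSet_Ioo]
  have hset : qtl μ ⁻¹' Iic z ∩ Ioo 0 1 = Iic (cdf μ z) ∩ Ioo 0 1 := by
    ext ℓ
    simp only [mem_inter_iff, mem_preimage, mem_Iic, and_congr_left_iff]
    intro hℓ
    exact qtl_le_iff hℓ
  rw [hset, ← ofReal_cdf μ z]
  have h0 : (0:ℝ) ≤ cdf μ z := cdf_nonneg μ z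
  have h1 : cdf μ z ≤ 1 := cdf_le_one μ z
  refine le_antisymm ?_ ?_
  · calc volume (Iic (cdf μ z) ∩ Ioo 0 1) ≤ volume (Ioc 0 (cdf μ z)) := by
          refine measure_mono (fun x hx => ?_)
          exact ⟨hx.2.1, hx.1⟩
    _ = ENNReal.ofReal (cdf μ z) := by rw [Real.volume_Ioc, sub_zero]
  · calc ENNReal.ofReal (cdf μ z) = volume (Ioo 0 (cdf μ z)) := by rw [Real.volume_Ioo, sub_zero]
    _ ≤ volume (Iic (cdf μ z) ∩ Ioo 0 1) := by
          refine measure_mono (fun x hx => ?_)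
          exact ⟨hx.2.le, hx.1, lt_of_lt_of_le hx.2 h1⟩

lemma qtl_integral_eq {f : ℝ → ℝ} (hf : AEStronglyMeasurable f μ) :
    ∫ ℓ in Ioo (0:ℝ) 1, f (qtl μ ℓ) = ∫ y, f y ∂μ := by
  conv_rhs => rw [← qtl_map (μ := μ)]
  exact (integral_map qtl_aemeasurable (by rwa [qtl_map])).symm

lemma qtl_integrable {f : ℝ → ℝ} (hi : Integrable f μ) :
    IntegrableOn (fun ℓ => f (qtl μ ℓ)) (Ioo (0:ℝ) 1) := by
  have hf : AEStronglyMeasurable f ((volume.restrict (Ioo (0:ℝ) 1)).map (qtl μ)) := by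
    rw [qtl_map]; exact hi.aestronglyMeasurable
  exact (integrable_map_measure hf qtl_aemeasurable).mp (by rwa [qtl_map])

end QuantileAux

set_option maxHeartbeats 2000000 in
/-- CVaR as Average Value-at-Risk: for an integrable `Y` and `α ∈ (0, 1]`,
`CVaR_α(Y) = (1/α)·∫_{1−α}^{1} VaR_{1−ℓ}(Y) dℓ`. -/
theorem stmt_12 {Ω : Type*} [MeasurableSpace Ω] (P : Measure Ω) [IsProbabilityMeasure P]
    (Y : Ω → ℝ) (hY : Integrable Y P) (α : ℝ) (hα : α ∈ Set.Ioc (0 : ℝ) 1) :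
    CVaR P α Y = (1 / α) * ∫ ℓ in Set.Ioo (1 - α) 1, VaR P (1 - ℓ) Y := by
  obtain ⟨hα0, hα1⟩ := hα
  have h1α : (0:ℝ) ≤ 1 - α := by linarith
  have hYm : AEMeasurable Y P := hY.aemeasurable
  haveI : IsProbabilityMeasure (P.map Y) := Measure.isProbabilityMeasure_map hYm
  set q : ℝ → ℝ := qtl (P.map Y) with hqdef
  -- VaR is the quantile function
  have hVaR : ∀ ℓ : ℝ, VaR P (1 - ℓ) Y = q ℓ := by
    intro ℓ
    have hset : {z : ℝ | ENNReal.ofReal (1 - (1 - ℓ)) ≤ P {ω | Y ω ≤ z}}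
        = {z : ℝ | ℓ ≤ cdf (P.map Y) z} := by
      ext z
      have hPz : P {ω | Y ω ≤ z} = (P.map Y) (Iic z) :=
        (Measure.map_apply_of_aemeasurable hYm measurableSet_Iic).symm
      simp only [Set.mem_setOf_eq, hPz, ← ofReal_cdf (P.map Y) z,
        ENNReal.ofReal_le_ofReal_iff (cdf_nonneg _ z)]
      constructor
      · intro h; linarith
      · intro h; linarith
    rw [VaR, hset]; rfl
  -- integrability of q on (0,1)
  have hid : Integrable (fun y : ℝ => y) (P.map Y) := by
    refine (integrable_map_measure aestronglyMeasurable_id hYm).mpr ?_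
    simpa [Function.comp] using hY
  have hq_int : IntegrableOn q (Ioo (0:ℝ) 1) volume := by
    have h := qtl_integrable hid; exact h
  -- integral transfer for the positive parts
  have hmaxint : ∀ s : ℝ, Integrable (fun y : ℝ => max (y - s) 0) (P.map Y) := by
    intro s
    refine (integrable_map_measure ?_ hYm).mpr ?_
    · exact (Continuous.aestronglyMeasurable (by continuity))
    · exact (hY.sub (integrable_const s)).pos_part
  have keyint : ∀ s : ℝ, IntegrableOn (fun ℓ => max (q ℓ - s) 0) (Ioo (0:ℝ) 1) volume := by
    intro s
    have h := qtl_integrable (hmaxint s); exact h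
  have key : ∀ s : ℝ, ∫ ω, max (Y ω - s) 0 ∂P = ∫ ℓ in Ioo (0:ℝ) 1, max (q ℓ - s) 0 := by
    intro s
    have h1 : ∫ ω, max (Y ω - s) 0 ∂P = ∫ y, max (y - s) 0 ∂(P.map Y) :=
      (integral_map (f := fun y => max (y - s) 0) hYm
        (Continuous.aestronglyMeasurable (by continuity))).symm
    have h2 := qtl_integral_eq (μ := P.map Y) (f := fun y => max (y - s) 0)
      (Continuous.aestronglyMeasurable (by continuity))
    exact h1.trans h2.symm
  set R : ℝ := (1/α) * ∫ ℓ in Ioo (1 - α) 1, q ℓ with hRdef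
  have hsub01 : Ioo (1 - α) 1 ⊆ Ioo (0:ℝ) 1 := fun x hx => ⟨lt_of_le_of_lt h1α hx.1, hx.2⟩
  -- lower bound: R ≤ F s for all s
  have hlow : ∀ s : ℝ, R ≤ s + (1/α) * ∫ ℓ in Ioo (0:ℝ) 1, max (q ℓ - s) 0 := by
    intro s
    have hqint' : IntegrableOn q (Ioo (1 - α) 1) volume := hq_int.mono_set hsub01
    have h1 : ∫ ℓ in Ioo (1 - α) 1, (q ℓ - s) = (∫ ℓ in Ioo (1 - α) 1, q ℓ) - α * s := by
      rw [integral_sub hqint' (integrable_const s), setIntegral_const]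
      rw [measureReal_def, Real.volume_Ioo, show (1:ℝ) - (1 - α) = α by ring, ENNReal.toReal_ofReal hα0.le,
        smul_eq_mul]
    have h2 : ∫ ℓ in Ioo (1 - α) 1, (q ℓ - s) ≤ ∫ ℓ in Ioo (1 - α) 1, max (q ℓ - s) 0 :=
      integral_mono (hqint'.sub (integrable_const s)) ((keyint s).mono_set hsub01)
        (fun ℓ => le_max_left _ _)
    have h3 : ∫ ℓ in Ioo (1 - α) 1, max (q ℓ - s) 0 ≤ ∫ ℓ in Ioo (0:ℝ) 1, max (q ℓ - s) 0 :=
      setIntegral_mono_set (keyint s)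
        (Filter.Eventually.of_forall fun ℓ => le_max_right _ _)
        (HasSubset.Subset.eventuallyLE hsub01)
    have h4 : (∫ ℓ in Ioo (1 - α) 1, q ℓ) - α * s ≤ ∫ ℓ in Ioo (0:ℝ) 1, max (q ℓ - s) 0 := by
      linarith
    have h5 := mul_le_mul_of_nonneg_left h4 (one_div_nonneg.mpr hα0.le)
    have h6 : (1/α) * (α * s) = s := by field_simp
    rw [mul_sub, h6] at h5
    rw [hRdef]; linarith
  have hbdd : BddBelow (Set.range fun s : ℝ => s + (1/α) * ∫ ℓ in Ioo (0:ℝ) 1, max (q ℓ - s) 0) :=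
    ⟨R, by rintro _ ⟨s, rfl⟩; exact hlow s⟩
  -- the value of F at q t for t ∈ (1-α, 1)
  have hFt : ∀ t : ℝ, t ∈ Ioo (1 - α) 1 →
      q t + (1/α) * ∫ ℓ in Ioo (0:ℝ) 1, max (q ℓ - q t) 0
        = R + (1/α) * ((t - (1 - α)) * q t - ∫ ℓ in Ioc (1 - α) t, q ℓ) := by
    intro t ht
    have htI : t ∈ Ioo (0:ℝ) 1 := hsub01 ht
    have hdisj : Disjoint (Ioc (0:ℝ) t) (Ioo t 1) :=
      Set.disjoint_left.mpr fun x hx hx' => absurd hx.2 (not_le.mpr hx'.1)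
    have hsubIoc : Ioc (0:ℝ) t ⊆ Ioo (0:ℝ) 1 := fun x hx => ⟨hx.1, lt_of_le_of_lt hx.2 htI.2⟩
    have hsubIoo : Ioo t 1 ⊆ Ioo (0:ℝ) 1 := fun x hx => ⟨lt_trans htI.1 hx.1, hx.2⟩
    have split1 : ∫ ℓ in Ioo (0:ℝ) 1, max (q ℓ - q t) 0
        = (∫ ℓ in Ioc (0:ℝ) t, max (q ℓ - q t) 0) + ∫ ℓ in Ioo t 1, max (q ℓ - q t) 0 := by
      rw [← Set.Ioc_union_Ioo_eq_Ioo htI.1.le htI.2,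
        setIntegral_union hdisj measurableSet_Ioo
          ((keyint (q t)).mono_set hsubIoc) ((keyint (q t)).mono_set hsubIoo)]
    have hzero : ∫ ℓ in Ioc (0:ℝ) t, max (q ℓ - q t) 0 = 0 := by
      rw [setIntegral_congr_fun measurableSet_Ioc
        (fun ℓ hℓ => max_eq_right (sub_nonpos.mpr
          (qtl_monotoneOn ⟨hℓ.1, lt_of_le_of_lt hℓ.2 htI.2⟩ htI hℓ.2)))]
      simp
    have hlin : ∫ ℓ in Ioo t 1, max (q ℓ - q t) 0 = (∫ ℓ in Ioo t 1, q ℓ) - (1 - t) * q t := by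
      rw [setIntegral_congr_fun measurableSet_Ioo
        (fun ℓ hℓ => max_eq_left (sub_nonneg.mpr
          (qtl_monotoneOn htI (hsubIoo hℓ) hℓ.1.le))),
        integral_sub (hq_int.mono_set hsubIoo) (integrable_const _), setIntegral_const,
        measureReal_def, Real.volume_Ioo, ENNReal.toReal_ofReal (by linarith [htI.2] : (0:ℝ) ≤ 1 - t), smul_eq_mul]
    have hdisj2 : Disjoint (Ioc (1 - α) t) (Ioo t 1) :=
      Set.disjoint_left.mpr fun x hx hx' => absurd hx.2 (not_le.mpr hx'.1)
    have hsubIoc2 : Ioc (1 - α) t ⊆ Ioo (0:ℝ) 1 :=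
      fun x hx => ⟨lt_of_le_of_lt h1α hx.1, lt_of_le_of_lt hx.2 htI.2⟩
    have hsplit : ∫ ℓ in Ioo (1 - α) 1, q ℓ
        = (∫ ℓ in Ioc (1 - α) t, q ℓ) + ∫ ℓ in Ioo t 1, q ℓ := by
      rw [← Set.Ioc_union_Ioo_eq_Ioo ht.1.le ht.2,
        setIntegral_union hdisj2 measurableSet_Ioo
          (hq_int.mono_set hsubIoc2) (hq_int.mono_set hsubIoo)]
    rw [split1, hzero, hlin, hRdef, hsplit]
    field_simp
    ring
  -- the approximating sequence tₙ ↓ 1-α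
  set t : ℕ → ℝ := fun n => (1 - α) + α / (n + 2) with htdef
  have ht_mem : ∀ n, t n ∈ Ioo (1 - α) 1 := by
    intro n
    constructor
    · exact lt_add_of_pos_right _ (div_pos hα0 (by positivity))
    · have h2 : α / ((n:ℝ) + 2) < α := div_lt_self hα0 (by
        have : (0:ℝ) ≤ (n:ℝ) := Nat.cast_nonneg n
        linarith)
      simp only [htdef]; linarith
  have ht_anti : ∀ m n : ℕ, m ≤ n → t n ≤ t m := by
    intro m n hmn
    simp only [htdef]
    have : α / ((n:ℝ) + 2) ≤ α / ((m:ℝ) + 2) := by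
      apply div_le_div_of_nonneg_left hα0.le (by positivity)
      have : (m:ℝ) ≤ (n:ℝ) := Nat.cast_le.mpr hmn
      linarith
    linarith
  -- B n → 0
  have hInter : ⋂ n, Ioc (1 - α) (t n) = (∅ : Set ℝ) := by
    rw [Set.eq_empty_iff_forall_notMem]
    intro x hx
    have hx1 : 1 - α < x := (Set.mem_iInter.mp hx 0).1
    set d : ℝ := x - (1 - α) with hddef
    have hd : 0 < d := by simp only [hddef]; linarith
    obtain ⟨n, hn⟩ := exists_nat_gt (α / d)
    have hn2 : α / d < (n:ℝ) + 2 := hn.trans (by linarith)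
    have h2 : α / ((n:ℝ) + 2) < d := by
      rw [div_lt_iff₀ (by positivity)]
      have h3 : α < ((n:ℝ) + 2) * d := (div_lt_iff₀ hd).mp hn2
      rw [mul_comm]; exact h3
    have := (Set.mem_iInter.mp hx n).2
    simp only [htdef] at this
    simp only [hddef] at h2
    linarith
  have hB : Tendsto (fun n => ∫ ℓ in Ioc (1 - α) (t n), q ℓ) atTop (𝓝 0) := by
    have hmono : Antitone (fun n => Ioc (1 - α) (t n)) :=
      fun m n hmn => Set.Ioc_subset_Ioc_right (ht_anti m n hmn)
    have hIocsub : ∀ n, Ioc (1 - α) (t n) ⊆ Ioo (0:ℝ) 1 := fun n x hx =>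
      ⟨lt_of_le_of_lt h1α hx.1, lt_of_le_of_lt hx.2 (ht_mem n).2⟩
    have := tendsto_setIntegral_of_antitone (f := q) (μ := volume)
      (fun n => measurableSet_Ioc) hmono ⟨0, hq_int.mono_set (hIocsub 0)⟩
    rw [hInter] at this
    simpa using this
  -- C n → 0 by squeeze
  have hIocsub : ∀ n, Ioc (1 - α) (t n) ⊆ Ioo (0:ℝ) 1 := fun n x hx =>
    ⟨lt_of_le_of_lt h1α hx.1, lt_of_le_of_lt hx.2 (ht_mem n).2⟩
  have htI : ∀ n, t n ∈ Ioo (0:ℝ) 1 := fun n => hsub01 (ht_mem n)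
  have hle1 : ∀ n, (∫ ℓ in Ioc (1 - α) (t n), q ℓ) ≤ (t n - (1 - α)) * q (t n) := by
    intro n
    have h1 : (∫ ℓ in Ioc (1 - α) (t n), q ℓ) ≤ ∫ _ in Ioc (1 - α) (t n), q (t n) := by
      refine setIntegral_mono_on (hq_int.mono_set (hIocsub n)) ((integrableOn_const_iff (by finiteness)).mpr ?_)
        measurableSet_Ioc ?_
      · right; exact measure_Ioc_lt_top
      · intro ℓ hℓ
        exact qtl_monotoneOn (μ := P.map Y) (hIocsub n hℓ) (htI n) hℓ.2
    rw [setIntegral_const, measureReal_def, Real.volume_Ioc,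
      ENNReal.toReal_ofReal (by linarith [(ht_mem n).1] : (0:ℝ) ≤ t n - (1 - α)),
      smul_eq_mul] at h1
    exact h1
  have hle2 : ∀ n, (t n - (1 - α)) * q (t n) ≤ (t n - (1 - α)) * q (t 0) := by
    intro n
    have hmq := qtl_monotoneOn (μ := P.map Y) (htI n) (htI 0) (ht_anti 0 n (Nat.zero_le n))
    exact mul_le_mul_of_nonneg_left hmq (by linarith [(ht_mem n).1])
  have htend : Tendsto (fun n : ℕ => t n - (1 - α)) atTop (𝓝 0) := by
    have h2 : Tendsto (fun n : ℕ => (n:ℝ) + 2) atTop atTop :=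
      tendsto_atTop_add_const_right _ 2 tendsto_natCast_atTop_atTop
    have h3 : Tendsto (fun n : ℕ => α / ((n:ℝ) + 2)) atTop (𝓝 0) :=
      Filter.Tendsto.div_atTop tendsto_const_nhds h2
    simpa only [htdef, add_sub_cancel_left] using h3
  have hD : Tendsto (fun n => (t n - (1 - α)) * q (t 0)) atTop (𝓝 0) := by
    simpa using htend.mul_const (q (t 0))
  have hC : Tendsto (fun n => (t n - (1 - α)) * q (t n)) atTop (𝓝 0) :=
    tendsto_of_tendsto_of_tendsto_of_le_of_le hB hD hle1 hle2
  have hseq : Tendsto (fun n => R + (1/α) * ((t n - (1 - α)) * q (t n)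
      - ∫ ℓ in Ioc (1 - α) (t n), q ℓ)) atTop (𝓝 R) := by
    have h := ((hC.sub hB).const_mul (1/α)).const_add R
    simpa using h
  -- conclusion
  simp only [CVaR, key, hVaR]
  rw [← hRdef]
  refine le_antisymm ?_ (le_ciInf hlow)
  refine ge_of_tendsto hseq (Filter.Eventually.of_forall fun n => ?_)
  rw [← hFt (t n) (ht_mem n)]
  exact ciInf_le hbdd (q (t n))
end

section
/- Let Y be a real-valued random variable on a probability space (Ω, F, P) with E[|Y|] < ∞, let α ∈ (0, 1), set v := VaR_α(Y), and suppose the cumulative distribution function F(z) := P(Y ≤ z) is continuous at z = v. Then P(Y ≥ v) = α and CVaR_α(Y) equals the conditional expectation of Y given the event {Y ≥ v}; that is, CVaR_α(Y) = E[Y·1_{Y ≥ v}] / P(Y ≥ v). -/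
open MeasureTheory Filter Topology ENNReal

/-- If the CDF of an integrable random variable `Y` is continuous at `v := VaR_α(Y)` for a
level `α ∈ (0, 1)`, then `P(Y ≥ v) = α` and `CVaR_α(Y)` equals the conditional expectation
of `Y` given `{Y ≥ v}`, i.e., `CVaR_α(Y) = E[Y·1_{Y ≥ v}] / P(Y ≥ v)`. -/
theorem stmt_13 {Ω : Type*} [MeasurableSpace Ω] (P : Measure Ω) [IsProbabilityMeasure P]
    (Y : Ω → ℝ) (hYmeas : Measurable Y) (hY : Integrable Y P)
    (α : ℝ) (hα : α ∈ Set.Ioo (0 : ℝ) 1)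
    (hcont : ContinuousAt (fun z : ℝ => (P {ω | Y ω ≤ z}).toReal) (VaR P α Y)) :
    P {ω | VaR P α Y ≤ Y ω} = ENNReal.ofReal α ∧
    CVaR P α Y
      = (∫ ω in {ω | VaR P α Y ≤ Y ω}, Y ω ∂P) / (P {ω | VaR P α Y ≤ Y ω}).toReal := by
  obtain ⟨hα0, hα1⟩ := hα
  have h1α0 : (0:ℝ) < 1 - α := by linarith
  set S : Set ℝ := {z : ℝ | ENNReal.ofReal (1 - α) ≤ P {ω | Y ω ≤ z}} with hS
  set v : ℝ := VaR P α Y with hv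
  have hVaR : v = sInf S := rfl
  have hfin : ∀ z : ℝ, P {ω | Y ω ≤ z} ≠ ⊤ := fun z => measure_ne_top P _
  have hmem : ∀ z : ℝ, z ∈ S ↔ 1 - α ≤ (P {ω | Y ω ≤ z}).toReal := by
    intro z
    rw [hS]; simp only [Set.mem_setOf_eq]
    rw [ENNReal.ofReal_le_iff_le_toReal (hfin z)]
  -- S nonempty
  have hSne : S.Nonempty := by
    have hmono : Monotone (fun n : ℕ => {ω | Y ω ≤ (n:ℝ)}) := by
      intro m n hmn ω h
      simp only [Set.mem_setOf_eq] at h ⊢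
      have : (m:ℝ) ≤ n := by exact_mod_cast hmn
      linarith
    have hunion : ⋃ n : ℕ, {ω | Y ω ≤ (n:ℝ)} = Set.univ := by
      ext ω; simp only [Set.mem_iUnion, Set.mem_univ, iff_true, Set.mem_setOf_eq]
      exact exists_nat_ge (Y ω)
    have htend : Tendsto (fun n : ℕ => P {ω | Y ω ≤ (n:ℝ)}) atTop
        (𝓝 (P (⋃ n : ℕ, {ω | Y ω ≤ (n:ℝ)}))) := tendsto_measure_iUnion_atTop hmono
    rw [hunion, measure_univ] at htend
    have hlt : ENNReal.ofReal (1 - α) < 1 := by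
      rw [← ENNReal.ofReal_one]
      exact (ENNReal.ofReal_lt_ofReal_iff_of_nonneg (by linarith)).mpr (by linarith)
    obtain ⟨n, hn⟩ := (htend.eventually (lt_mem_nhds hlt)).exists
    exact ⟨n, hn.le⟩
  -- S bounded below
  have hSbdd : BddBelow S := by
    have hanti : Antitone (fun n : ℕ => {ω | Y ω ≤ -(n:ℝ)}) := by
      intro m n hmn ω h
      simp only [Set.mem_setOf_eq] at h ⊢
      have : (m:ℝ) ≤ n := by exact_mod_cast hmn
      linarith
    have hinter : ⋂ n : ℕ, {ω | Y ω ≤ -(n:ℝ)} = ∅ := by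
      ext ω
      simp only [Set.mem_iInter, Set.mem_setOf_eq, Set.mem_empty_iff_false, iff_false, not_forall]
      obtain ⟨n, hn⟩ := exists_nat_ge (-(Y ω))
      refine ⟨n + 1, by push_neg; push_cast; linarith⟩
    have htend : Tendsto (fun n : ℕ => P {ω | Y ω ≤ -(n:ℝ)}) atTop
        (𝓝 (P (⋂ n : ℕ, {ω | Y ω ≤ -(n:ℝ)}))) := by
      exact tendsto_measure_iInter_atTop
        (fun n => (hYmeas measurableSet_Iic).nullMeasurableSet) hanti ⟨0, hfin _⟩
    rw [hinter, measure_empty] at htend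
    have hpos : 0 < ENNReal.ofReal (1 - α) := ENNReal.ofReal_pos.mpr h1α0
    obtain ⟨m, hm⟩ := (htend.eventually (gt_mem_nhds hpos)).exists
    refine ⟨-(m:ℝ), fun z hz => ?_⟩
    by_contra h
    push_neg at h
    have hsub : P {ω | Y ω ≤ z} ≤ P {ω | Y ω ≤ -(m:ℝ)} :=
      measure_mono (fun ω hω => le_trans hω h.le)
    exact absurd (le_trans hz hsub) (not_le.mpr hm)
  -- F(v) ≥ 1 - α
  have hfv : 1 - α ≤ (P {ω | Y ω ≤ v}).toReal := by
    by_contra h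
    push_neg at h
    set ε := (1 - α) - (P {ω | Y ω ≤ v}).toReal with hε
    have hεpos : 0 < ε := by linarith
    obtain ⟨δ, hδpos, hδ⟩ := Metric.continuousAt_iff.mp hcont ε hεpos
    obtain ⟨z, hzS, hzlt⟩ := (csInf_lt_iff hSbdd hSne).mp
      (show sInf S < v + δ by rw [← hVaR]; linarith)
    have hvz : v ≤ z := by rw [hVaR]; exact csInf_le hSbdd hzS
    have hdist : dist z v < δ := by
      rw [Real.dist_eq, abs_of_nonneg (by linarith)]; linarith
    have hd := hδ hdist
    rw [Real.dist_eq] at hd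
    have hz' := (hmem z).mp hzS
    have habs := abs_lt.mp hd
    linarith [habs.1, habs.2]
  -- P(Y < v) ≤ 1 - α
  have hBle : P {ω | Y ω < v} ≤ ENNReal.ofReal (1 - α) := by
    have hBU : {ω | Y ω < v} = ⋃ n : ℕ, {ω | Y ω ≤ v - 1/((n:ℝ)+1)} := by
      ext ω; simp only [Set.mem_setOf_eq, Set.mem_iUnion]
      constructor
      · intro h
        obtain ⟨n, hn⟩ := exists_nat_one_div_lt (show (0:ℝ) < v - Y ω by linarith)
        exact ⟨n, by push_cast at hn ⊢; linarith⟩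
      · rintro ⟨n, hn⟩
        have : (0:ℝ) < 1/((n:ℝ)+1) := by positivity
        linarith
    have hdir : Directed (· ⊆ ·) (fun n : ℕ => {ω | Y ω ≤ v - 1/((n:ℝ)+1)}) := by
      apply Monotone.directed_le
      intro m n hmn ω h
      have h1 : (1:ℝ)/((n:ℝ)+1) ≤ 1/((m:ℝ)+1) := by
        apply one_div_le_one_div_of_le (by positivity)
        have : (m:ℝ) ≤ n := by exact_mod_cast hmn
        linarith
      simp only [Set.mem_setOf_eq] at *
      linarith
    rw [hBU, hdir.measure_iUnion]
    apply iSup_le; intro n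
    have hnot : v - 1/((n:ℝ)+1) ∉ S := by
      apply notMem_of_lt_csInf _ hSbdd
      rw [← hVaR]
      have : (0:ℝ) < 1/((n:ℝ)+1) := by positivity
      linarith
    rw [hS, Set.mem_setOf_eq, not_le] at hnot
    exact hnot.le
  -- P(Y < v) ≥ 1 - α
  have hBge : 1 - α ≤ (P {ω | Y ω < v}).toReal := by
    have hseq : Tendsto (fun n : ℕ => v - 1/((n:ℝ)+1)) atTop (𝓝 v) := by
      have h0 : Tendsto (fun n : ℕ => v - 1/((n:ℝ)+1)) atTop (𝓝 (v - 0)) :=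
        tendsto_const_nhds.sub tendsto_one_div_add_atTop_nhds_zero_nat
      simpa using h0
    have hcomp := (hcont.tendsto.comp hseq)
    have hle : ∀ n : ℕ, (P {ω | Y ω ≤ v - 1/((n:ℝ)+1)}).toReal
        ≤ (P {ω | Y ω < v}).toReal := by
      intro n
      apply ENNReal.toReal_mono (measure_ne_top P _)
      apply measure_mono
      intro ω hω
      have : (0:ℝ) < 1/((n:ℝ)+1) := by positivity
      simp only [Set.mem_setOf_eq] at *
      linarith
    have := le_of_tendsto hcomp (Eventually.of_forall hle)
    linarith
  have hBtop : P {ω | Y ω < v} ≠ ⊤ := measure_ne_top P _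
  have hBeq : P {ω | Y ω < v} = ENNReal.ofReal (1 - α) := by
    apply le_antisymm hBle
    rw [ENNReal.ofReal_le_iff_le_toReal hBtop]
    exact hBge
  have hcompl : {ω | v ≤ Y ω} = {ω | Y ω < v}ᶜ := by
    ext ω; simp [not_lt]
  have hBmeas : MeasurableSet {ω | Y ω < v} := hYmeas measurableSet_Iio
  have hPA : P {ω | v ≤ Y ω} = ENNReal.ofReal α := by
    rw [hcompl, measure_compl hBmeas hBtop, hBeq, measure_univ]
    rw [show (1:ℝ≥0∞) = ENNReal.ofReal α + ENNReal.ofReal (1-α) by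
      rw [← ENNReal.ofReal_add hα0.le (by linarith)]; norm_num]
    exact ENNReal.add_sub_cancel_right ENNReal.ofReal_ne_top
  refine ⟨hPA, ?_⟩
  -- Part B
  set A : Set Ω := {ω | v ≤ Y ω} with hA
  have hAmeas : MeasurableSet A := hYmeas measurableSet_Ici
  have hPAr : (P A).toReal = α := by rw [hPA, ENNReal.toReal_ofReal hα0.le]
  have hint : ∀ s : ℝ, Integrable (fun ω => max (Y ω - s) 0) P :=
    fun s => (hY.sub (integrable_const s)).pos_part
  set g : ℝ → ℝ := fun s => s + (1 / α) * ∫ ω, max (Y ω - s) 0 ∂P with hg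
  -- key inequality: g v ≤ g s for all s
  have key : ∀ s : ℝ, g v ≤ g s := by
    intro s
    have hpt : ∀ ω, max (Y ω - v) 0 + A.indicator (fun _ => v - s) ω ≤ max (Y ω - s) 0 := by
      intro ω
      by_cases h : ω ∈ A
      · have hvY : v ≤ Y ω := h
        rw [Set.indicator_of_mem h]
        rw [max_eq_left (by linarith : (0:ℝ) ≤ Y ω - v)]
        have := le_max_left (Y ω - s) 0
        linarith
      · have hvY : Y ω < v := not_le.mp h
        rw [Set.indicator_of_notMem h]
        rw [max_eq_right (by linarith : Y ω - v ≤ 0)]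
        have := le_max_right (Y ω - s) 0
        linarith
    have hindint : Integrable (A.indicator fun _ => v - s) P :=
      (integrable_const _).indicator hAmeas
    have hmono := integral_mono ((hint v).add hindint) (hint s) hpt
    simp only [Pi.add_apply] at hmono
    rw [integral_add (hint v) hindint, integral_indicator_const _ hAmeas, measureReal_def, hPAr,
      smul_eq_mul] at hmono
    -- hmono : ∫ max(Y-v,0) + α * (v - s) ≤ ∫ max(Y-s,0)
    have hc : (1/α) * α = 1 := by field_simp
    have h2 := mul_le_mul_of_nonneg_left hmono (le_of_lt (one_div_pos.mpr hα0))
    rw [mul_add, ← mul_assoc, hc, one_mul] at h2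
    simp only [hg]
    linarith
  have hCVaR : CVaR P α Y = g v := by
    have hbd : BddBelow (Set.range g) := ⟨g v, by rintro _ ⟨s, rfl⟩; exact key s⟩
    exact le_antisymm (ciInf_le hbd v) (le_ciInf key)
  -- compute g v
  have hmaxv : (fun ω => max (Y ω - v) 0) = A.indicator (fun ω => Y ω - v) := by
    funext ω
    by_cases h : ω ∈ A
    · have hvY : v ≤ Y ω := h
      rw [Set.indicator_of_mem h, max_eq_left (by linarith)]
    · have hvY : Y ω < v := not_le.mp h
      rw [Set.indicator_of_notMem h, max_eq_right (by linarith)]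
  have hEv : ∫ ω, max (Y ω - v) 0 ∂P = (∫ ω in A, Y ω ∂P) - α * v := by
    rw [hmaxv, integral_indicator hAmeas]
    rw [integral_sub hY.integrableOn ((integrableOn_const_iff (C := v)).mpr (Or.inr (measure_lt_top P A)))]
    rw [setIntegral_const, measureReal_def, hPAr, smul_eq_mul]
  rw [hCVaR, hg]
  simp only
  rw [hEv, hPAr]
  field_simp
  ring
end

section
/- Let X be a Polish space (separable, completely metrizable) and A a nonempty compact Polish space, and let v : X × A → ℝ be continuous. Then the function J : X → ℝ defined by J(x) := inf_{u ∈ A} v(x, u) is continuous, and there exists a Borel-measurable function κ : X → A such that v(x, κ(x)) = J(x) for all x ∈ X. -/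
open MeasureTheory Set Topology

namespace Stmt15Aux

set_option linter.unusedSectionVars false

variable {X A : Type*}
    [TopologicalSpace X] [PolishSpace X]
    [TopologicalSpace A] [PolishSpace A] [CompactSpace A] [Nonempty A]

noncomputable def auxJ (v : X × A → ℝ) (x : X) : ℝ := ⨅ u : A, v (x, u)

theorem bddBelow_range (v : X × A → ℝ) (hv : Continuous v) (x : X) :
    BddBelow (Set.range fun u : A => v (x, u)) :=
  (isCompact_range (hv.comp (Continuous.prodMk_right x))).bddBelow

theorem exists_min (v : X × A → ℝ) (hv : Continuous v) (x : X) :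
    ∃ u : A, ∀ u' : A, v (x, u) ≤ v (x, u') := by
  obtain ⟨u, -, hu⟩ := isCompact_univ.exists_isMinOn univ_nonempty
    ((hv.comp (Continuous.prodMk_right x)).continuousOn (s := univ))
  exact ⟨u, fun u' => hu (mem_univ u')⟩

theorem auxJ_eq_min (v : X × A → ℝ) (hv : Continuous v) (x : X) {u : A}
    (hu : ∀ u' : A, v (x, u) ≤ v (x, u')) : auxJ v x = v (x, u) :=
  le_antisymm (ciInf_le (bddBelow_range v hv x) u) (le_ciInf hu)

theorem auxJ_le (v : X × A → ℝ) (hv : Continuous v) (x : X) (u : A) :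
    auxJ v x ≤ v (x, u) := ciInf_le (bddBelow_range v hv x) u

theorem auxJ_cont (v : X × A → ℝ) (hv : Continuous v) : Continuous (auxJ v) := by
  rw [continuous_iff_continuousAt]
  intro x₀
  rw [ContinuousAt, Metric.tendsto_nhds]
  intro ε hε
  obtain ⟨u₀, hu₀⟩ := exists_min v hv x₀
  have hJ₀ : auxJ v x₀ = v (x₀, u₀) := auxJ_eq_min v hv x₀ hu₀
  -- upper bound neighborhood
  have hupper : ∀ᶠ x in nhds x₀, auxJ v x < auxJ v x₀ + ε := by
    have hc : Continuous fun x => v (x, u₀) := hv.comp (continuous_id.prodMk continuous_const)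
    have : ∀ᶠ x in nhds x₀, v (x, u₀) < auxJ v x₀ + ε := by
      have : ContinuousAt (fun x => v (x, u₀)) x₀ := hc.continuousAt
      apply this.eventually_lt continuousAt_const
      rw [hJ₀]; linarith
    exact this.mono fun x hx => lt_of_le_of_lt (auxJ_le v hv x u₀) hx
  -- lower bound neighborhood, via tube lemma
  have hlower : ∀ᶠ x in nhds x₀, auxJ v x₀ - ε < auxJ v x := by
    have hN : IsOpen {p : X × A | auxJ v x₀ - ε < v p} :=
      isOpen_lt continuous_const hv
    have hsub : ({x₀} : Set X) ×ˢ (univ : Set A) ⊆ {p : X × A | auxJ v x₀ - ε < v p} := by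
      rintro ⟨x, u⟩ ⟨rfl, -⟩
      have h1 : auxJ v x ≤ v (x, u) := auxJ_le v hv x u
      simp only [mem_setOf_eq]
      linarith
    obtain ⟨U, W, hU, hW, hxU, hAW, hUW⟩ :=
      generalized_tube_lemma isCompact_singleton isCompact_univ hN hsub
    filter_upwards [hU.mem_nhds (hxU rfl)] with x hx
    obtain ⟨ux, hux⟩ := exists_min v hv x
    have hmem : (x, ux) ∈ U ×ˢ W := ⟨hx, hAW (mem_univ ux)⟩
    have := hUW hmem
    simp only [mem_setOf_eq] at this
    rw [auxJ_eq_min v hv x hux]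
    exact this
  filter_upwards [hupper, hlower] with x h1 h2
  rw [Real.dist_eq, abs_sub_lt_iff]
  constructor <;> linarith



noncomputable def auxS (v : X × A → ℝ) (c : ℕ → A → ℝ) : ℕ → X → Set A
  | 0 => fun x => {u | v (x, u) ≤ auxJ v x}
  | (n+1) => fun x =>
      {u | u ∈ auxS v c n x ∧ c n u ≤ sInf (c n '' auxS v c n x)}

noncomputable def auxm (v : X × A → ℝ) (c : ℕ → A → ℝ) (n : ℕ) (x : X) : ℝ :=
  sInf (c n '' auxS v c n x)

variable (v : X × A → ℝ) (c : ℕ → A → ℝ)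

theorem isClosed_auxS (hv : Continuous v) (hc : ∀ n, Continuous (c n)) (n : ℕ) (x : X) :
    IsClosed (auxS v c n x) := by
  induction n with
  | zero =>
    exact isClosed_le (hv.comp (Continuous.prodMk_right x)) continuous_const
  | succ n ih =>
    exact ih.inter (isClosed_le (hc n) continuous_const)

theorem isCompact_auxS (hv : Continuous v) (hc : ∀ n, Continuous (c n)) (n : ℕ) (x : X) :
    IsCompact (auxS v c n x) := (isClosed_auxS v c hv hc n x).isCompact

theorem nonempty_auxS (hv : Continuous v) (hc : ∀ n, Continuous (c n)) (n : ℕ) (x : X) :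
    (auxS v c n x).Nonempty := by
  induction n with
  | zero =>
    obtain ⟨u, hu⟩ := exists_min v hv x
    exact ⟨u, le_of_eq (auxJ_eq_min v hv x hu).symm⟩
  | succ n ih =>
    obtain ⟨u, hu, hmin⟩ := (isCompact_auxS v c hv hc n x).exists_isMinOn ih
      ((hc n).continuousOn)
    refine ⟨u, hu, le_csInf (ih.image _) ?_⟩
    rintro b ⟨u', hu', rfl⟩
    exact hmin hu'

theorem auxm_le (hv : Continuous v) (hc : ∀ n, Continuous (c n)) {n : ℕ} {x : X} {u : A}
    (hu : u ∈ auxS v c n x) : auxm v c n x ≤ c n u :=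
  csInf_le ((isCompact_auxS v c hv hc n x).image (hc n)).bddBelow (mem_image_of_mem _ hu)

theorem auxm_eq (hv : Continuous v) (hc : ∀ n, Continuous (c n)) {n : ℕ} {x : X} {u : A}
    (hu : u ∈ auxS v c (n+1) x) : c n u = auxm v c n x :=
  le_antisymm hu.2 (auxm_le v c hv hc hu.1)

theorem auxS_spec (n : ℕ) (x : X) :
    auxS v c n x = {u | v (x, u) ≤ auxJ v x ∧ ∀ i < n, c i u ≤ auxm v c i x} := by
  induction n with
  | zero => ext u; simp [auxS]
  | succ n ih =>
    ext u
    constructor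
    · rintro ⟨h1, h3⟩
      have h3' : c n u ≤ auxm v c n x := h3
      rw [ih] at h1
      obtain ⟨ha, hb⟩ := h1
      refine ⟨ha, fun i hi => ?_⟩
      rcases Nat.lt_succ_iff_lt_or_eq.1 hi with hi' | rfl
      · exact hb i hi'
      · exact h3'
    · rintro ⟨h1, h2⟩
      refine ⟨?_, h2 n (Nat.lt_succ_self n)⟩
      rw [ih]
      exact ⟨h1, fun i hi => h2 i (hi.trans (Nat.lt_succ_self n))⟩

theorem antitone_auxS (hv : Continuous v) (hc : ∀ n, Continuous (c n)) (n : ℕ) (x : X) :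
    auxS v c (n+1) x ⊆ auxS v c n x := fun _ hu => hu.1

/-- The relaxed constraint set. -/
def auxT (n : ℕ) (ε : ℝ) (x : X) : Set A :=
  {u | v (x, u) ≤ auxJ v x + ε ∧ ∀ i < n, c i u ≤ auxm v c i x + ε}

theorem isClosed_auxT (hv : Continuous v) (hc : ∀ n, Continuous (c n)) (n : ℕ) (ε : ℝ) (x : X) :
    IsClosed (auxT v c n ε x) := by
  have : auxT v c n ε x =
      {u | v (x, u) ≤ auxJ v x + ε} ∩ ⋂ i, ⋂ (_ : i < n), {u | c i u ≤ auxm v c i x + ε} := by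
    ext u; simp [auxT, mem_iInter]
  rw [this]
  exact (isClosed_le (hv.comp (Continuous.prodMk_right x)) continuous_const).inter
    (isClosed_iInter fun i => isClosed_iInter fun _ =>
      isClosed_le (hc i) continuous_const)

theorem auxS_subset_auxT (hε : 0 ≤ ε) (n : ℕ) (x : X) :
    auxS v c n x ⊆ auxT v c n ε x := by
  rw [auxS_spec]
  rintro u ⟨h1, h2⟩
  exact ⟨by linarith, fun i hi => by have := h2 i hi; linarith⟩

theorem auxT_mono {ε ε' : ℝ} (h : ε ≤ ε') (n : ℕ) (x : X) :
    auxT v c n ε x ⊆ auxT v c n ε' x := by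
  rintro u ⟨h1, h2⟩
  exact ⟨by linarith, fun i hi => by have := h2 i hi; linarith⟩

/-- Key approximation: the inf over the relaxed set converges to `auxm`. -/
theorem auxm_approx (hv : Continuous v) (hc : ∀ n, Continuous (c n)) (n : ℕ) (x : X)
    {δ : ℝ} (hδ : 0 < δ) :
    ∃ ε > 0, auxm v c n x - δ ≤ sInf (c n '' auxT v c n ε x) := by
  by_contra hcon
  push_neg at hcon
  set K : ℕ → Set A := fun j =>
    auxT v c n (1 / (j + 1)) x ∩ {u | c n u ≤ auxm v c n x - δ} with hK
  have hεpos : ∀ j : ℕ, (0:ℝ) < 1 / (j + 1) := fun j => by positivity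
  have hTne : ∀ j : ℕ, (auxT v c n (1 / (j + 1)) x).Nonempty := fun j =>
    (nonempty_auxS v c hv hc n x).mono (auxS_subset_auxT v c (hεpos j).le n x)
  have hTc : ∀ j : ℕ, IsCompact (auxT v c n (1 / (j + 1)) x) := fun j =>
    (isClosed_auxT v c hv hc n _ x).isCompact
  have hKne : ∀ j : ℕ, (K j).Nonempty := by
    intro j
    obtain ⟨u, hu, hmin⟩ := (hTc j).exists_isMinOn (hTne j) ((hc n).continuousOn)
    refine ⟨u, hu, ?_⟩
    have h1 : c n u ≤ sInf (c n '' auxT v c n (1 / (j + 1)) x) := by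
      refine le_csInf ((hTne j).image _) ?_
      rintro b ⟨u', hu', rfl⟩
      exact hmin hu'
    have h2 := hcon (1 / (j + 1)) (hεpos j)
    simp only [mem_setOf_eq]
    linarith
  have hKclosed : ∀ j : ℕ, IsClosed (K j) := fun j =>
    (isClosed_auxT v c hv hc n _ x).inter (isClosed_le (hc n) continuous_const)
  have hKsub : ∀ j : ℕ, K (j + 1) ⊆ K j := by
    intro j
    apply Set.inter_subset_inter_left
    apply auxT_mono
    have h1 : (0:ℝ) < (j:ℝ) + 1 := by positivity
    have h2 : (0:ℝ) < (j:ℝ) + 1 + 1 := by positivity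
    rw [div_le_div_iff₀ (by push_cast; linarith) h1]
    push_cast
    nlinarith
  obtain ⟨u, hu⟩ := IsCompact.nonempty_iInter_of_sequence_nonempty_isCompact_isClosed
    K hKsub hKne (hKclosed 0).isCompact hKclosed
  rw [mem_iInter] at hu
  have huS : u ∈ auxS v c n x := by
    rw [auxS_spec]
    have key : ∀ b r : ℝ, (∀ j : ℕ, b ≤ r + 1 / (j + 1)) → b ≤ r := by
      intro b r h
      by_contra hbr
      push_neg at hbr
      obtain ⟨j, hj⟩ := exists_nat_one_div_lt (sub_pos.2 hbr)
      have := h j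
      linarith
    constructor
    · exact key _ _ fun j => (hu j).1.1
    · intro i hi
      exact key _ _ fun j => (hu j).1.2 i hi
  have h1 : auxm v c n x ≤ c n u := auxm_le v c hv hc huS
  have h2 : c n u ≤ auxm v c n x - δ := (hu 0).2
  linarith

theorem measurable_auxm [MeasurableSpace X] [BorelSpace X]
    (hv : Continuous v) (hc : ∀ n, Continuous (c n)) (n : ℕ) :
    Measurable (auxm v c n) := by
  induction n using Nat.strong_induction_on with
  | _ n IH =>
  classical
  set d : ℕ → A := TopologicalSpace.denseSeq A with hd_def
  have hd : DenseRange d := TopologicalSpace.denseRange_denseSeq A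
  obtain ⟨B, hB⟩ : ∃ B, ∀ u : A, c n u ≤ B := by
    obtain ⟨B, hB⟩ := (isCompact_range (hc n)).bddAbove
    exact ⟨B, fun u => hB ⟨u, rfl⟩⟩
  obtain ⟨b, hb⟩ : ∃ b, ∀ u : A, b ≤ c n u := by
    obtain ⟨b, hb⟩ := (isCompact_range (hc n)).bddBelow
    exact ⟨b, fun u => hb ⟨u, rfl⟩⟩
  set ε : ℕ → ℝ := fun j => 1 / ((j : ℝ) + 1) with hε_def
  have hεpos : ∀ j, 0 < ε j := fun j => by positivity
  set P : ℕ → ℕ → X → Prop := fun j k x =>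
    v (x, d k) < auxJ v x + ε j ∧ ∀ i < n, c i (d k) < auxm v c i x + ε j with hP_def
  set ψ : ℕ → ℕ → X → ℝ := fun j k x => if P j k x then c n (d k) else B with hψ_def
  set h : ℕ → X → ℝ := fun j x => ⨅ k, ψ j k x with hh_def
  have hψ_lb : ∀ j x k, min b B ≤ ψ j k x := by
    intro j x k
    simp only [hψ_def]
    split
    · exact (min_le_left _ _).trans (hb _)
    · exact min_le_right _ _
  have hψ_bdd : ∀ j x, BddBelow (Set.range fun k => ψ j k x) := by
    intro j x
    exact ⟨min b B, by rintro y ⟨k, rfl⟩; exact hψ_lb j x k⟩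
  -- (ii) `h j x ≤ auxm v c n x`
  have h_le : ∀ j x, h j x ≤ auxm v c n x := by
    intro j x
    have key : ∀ δ > 0, h j x ≤ auxm v c n x + δ := by
      intro δ hδ
      obtain ⟨u, huS1⟩ := nonempty_auxS v c hv hc (n + 1) x
      have huS : u ∈ auxS v c n x := huS1.1
      have hcu : c n u = auxm v c n x := auxm_eq v c hv hc huS1
      have huS' := huS
      rw [auxS_spec] at huS'
      set O : Set A :=
        ({u' : A | v (x, u') < auxJ v x + ε j} ∩
          ⋂ i ∈ Finset.range n, {u' : A | c i u' < auxm v c i x + ε j}) ∩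
          {u' : A | c n u' < auxm v c n x + δ} with hO_def
      have hO_open : IsOpen O :=
        ((isOpen_lt (hv.comp (Continuous.prodMk_right x)) continuous_const).inter
            (isOpen_biInter_finset fun i _ => isOpen_lt (hc i) continuous_const)).inter
          (isOpen_lt (hc n) continuous_const)
      have hu_mem : u ∈ O := by
        refine ⟨⟨?_, ?_⟩, ?_⟩
        · have := huS'.1
          have := hεpos j
          simp only [mem_setOf_eq]; linarith
        · simp only [Set.mem_iInter, Finset.mem_range, mem_setOf_eq]
          intro i hi
          have := huS'.2 i hi
          have := hεpos j
          linarith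
        · simp only [mem_setOf_eq]
          rw [hcu]; linarith
      obtain ⟨k, hk⟩ := hd.exists_mem_open hO_open ⟨u, hu_mem⟩
      have hPk : P j k x := by
        refine ⟨hk.1.1, fun i hi => ?_⟩
        have := hk.1.2
        simp only [Set.mem_iInter, Finset.mem_range, mem_setOf_eq] at this
        exact this i hi
      have hψk : ψ j k x = c n (d k) := if_pos hPk
      have h1 : h j x ≤ ψ j k x := ciInf_le (hψ_bdd j x) k
      have h2 : c n (d k) < auxm v c n x + δ := hk.2
      rw [hψk] at h1
      linarith
    by_contra hcon
    push_neg at hcon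
    have := key ((h j x - auxm v c n x) / 2) (by linarith)
    linarith
  -- (iii) characterization of `t < auxm v c n x`
  have h_char : ∀ x t, t < auxm v c n x ↔ ∃ j, t < h j x := by
    intro x t
    constructor
    · intro ht
      obtain ⟨ε', hε'pos, hε'⟩ := auxm_approx v c hv hc n x
        (δ := (auxm v c n x - t) / 2) (by linarith)
      obtain ⟨j, hj⟩ := exists_nat_one_div_lt hε'pos
      refine ⟨j, ?_⟩
      have hεj : ε j ≤ ε' := le_of_lt hj
      have hTne : (auxT v c n ε' x).Nonempty :=
        (nonempty_auxS v c hv hc n x).mono (auxS_subset_auxT v c hε'pos.le n x)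
      have hTbdd : BddBelow (c n '' auxT v c n ε' x) :=
        (((isClosed_auxT v c hv hc n ε' x).isCompact).image (hc n)).bddBelow
      have key : ∀ k, sInf (c n '' auxT v c n ε' x) ≤ ψ j k x := by
        intro k
        by_cases hPk : P j k x
        · rw [hψ_def]
          simp only [if_pos hPk]
          refine csInf_le hTbdd (mem_image_of_mem _ ?_)
          obtain ⟨h1, h2⟩ := hPk
          constructor
          · have := hεpos j; linarith [h1]
          · intro i hi
            have := h2 i hi
            linarith
        · rw [hψ_def]
          simp only [if_neg hPk]
          obtain ⟨u₀, hu₀⟩ := hTne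
          calc sInf (c n '' auxT v c n ε' x) ≤ c n u₀ :=
                csInf_le hTbdd (mem_image_of_mem _ hu₀)
            _ ≤ B := hB u₀
      have hle : sInf (c n '' auxT v c n ε' x) ≤ h j x := le_ciInf key
      linarith
    · rintro ⟨j, hj⟩
      exact hj.trans_le (h_le j x)
  -- measurability of ψ
  have hψ_meas : ∀ j k, Measurable (ψ j k) := by
    intro j k
    have hPset : MeasurableSet {x | P j k x} := by
      have h1 : MeasurableSet {x : X | v (x, d k) < auxJ v x + ε j} :=
        measurableSet_lt (hv.comp (continuous_id.prodMk continuous_const)).measurable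
          ((auxJ_cont v hv).measurable.add_const _)
      have h2 : MeasurableSet {x : X | ∀ i < n, c i (d k) < auxm v c i x + ε j} := by
        have heq : {x : X | ∀ i < n, c i (d k) < auxm v c i x + ε j}
            = ⋂ i, ⋂ (_ : i < n), {x : X | c i (d k) < auxm v c i x + ε j} := by
          ext x; simp
        rw [heq]
        exact MeasurableSet.iInter fun i => MeasurableSet.iInter fun hi =>
          measurableSet_lt measurable_const ((IH i hi).add_const _)
      have heq : {x | P j k x} = {x : X | v (x, d k) < auxJ v x + ε j} ∩
          {x : X | ∀ i < n, c i (d k) < auxm v c i x + ε j} := by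
        ext x; simp [hP_def]
      rw [heq]
      exact h1.inter h2
    exact Measurable.ite hPset measurable_const measurable_const
  have hh_meas : ∀ j, Measurable (h j) := by
    intro j
    apply measurable_of_Iio
    intro t
    have heq : h j ⁻¹' Iio t = ⋃ k, ψ j k ⁻¹' Iio t := by
      ext x
      simp only [mem_preimage, mem_Iio, mem_iUnion]
      constructor
      · intro hx; exact exists_lt_of_ciInf_lt hx
      · rintro ⟨k, hk⟩; exact lt_of_le_of_lt (ciInf_le (hψ_bdd j x) k) hk
    rw [heq]
    exact MeasurableSet.iUnion fun k => (hψ_meas j k) measurableSet_Iio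
  apply measurable_of_Ioi
  intro t
  have heq : auxm v c n ⁻¹' Ioi t = ⋃ j, h j ⁻¹' Ioi t := by
    ext x
    simp only [mem_preimage, mem_Ioi, mem_iUnion]
    exact h_char x t
  rw [heq]
  exact MeasurableSet.iUnion fun j => (hh_meas j) measurableSet_Ioi

end Stmt15Aux

open Stmt15Aux in
/-- Measurable selection for continuous objectives (Bertsekas–Shreve Prop. 7.32/7.33):
if `X` is Polish, `A` is a nonempty compact Polish space, and `v : X × A → ℝ` is
continuous, then `J(x) := inf_{u ∈ A} v(x, u)` is continuous and there is a
Borel-measurable selector `κ : X → A` with `v(x, κ(x)) = J(x)` for every `x`. -/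
theorem stmt_15 {X A : Type*}
    [TopologicalSpace X] [PolishSpace X] [MeasurableSpace X] [BorelSpace X]
    [TopologicalSpace A] [PolishSpace A] [CompactSpace A] [Nonempty A]
    [MeasurableSpace A] [BorelSpace A]
    (v : X × A → ℝ) (hv : Continuous v) :
    Continuous (fun x => ⨅ u : A, v (x, u)) ∧
    ∃ κ : X → A, Measurable κ ∧ ∀ x, v (x, κ x) = ⨅ u : A, v (x, u) := by
  constructor
  · exact auxJ_cont v hv
  obtain ⟨f, hf⟩ := TopologicalSpace.exists_embedding_l_infty A
  set c : ℕ → A → ℝ := fun n u => f u n with hc_def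
  have hc : ∀ n, Continuous (c n) := fun n =>
    (continuous_eval_const n).comp hf.continuous
  have hInter : ∀ x, (⋂ n, auxS v c n x).Nonempty := by
    intro x
    apply IsCompact.nonempty_iInter_of_sequence_nonempty_isCompact_isClosed
    · exact fun n => antitone_auxS v c hv hc n x
    · exact fun n => nonempty_auxS v c hv hc n x
    · exact isCompact_auxS v c hv hc 0 x
    · exact fun n => isClosed_auxS v c hv hc n x
  set κ : X → A := fun x => (hInter x).some with hκ_def
  have hκS : ∀ x n, κ x ∈ auxS v c n x := fun x n =>
    (Set.mem_iInter.1 (hInter x).some_mem) n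
  have hκm : ∀ x n, c n (κ x) = auxm v c n x := fun x n =>
    auxm_eq v c hv hc (hκS x (n + 1))
  refine ⟨κ, ?_, ?_⟩
  · set e : A → (ℕ → ℝ) := fun u n => c n u with he_def
    have he_cont : Continuous e := continuous_pi fun n => hc n
    have he_inj : Function.Injective e := by
      intro u u' huu
      apply hf.injective
      ext n
      exact congrFun huu n
    have hemb : MeasurableEmbedding e := he_cont.measurableEmbedding he_inj
    rw [← hemb.measurable_comp_iff]
    apply measurable_pi_lambda
    intro n
    have heq : (fun x => (e ∘ κ) x n) = auxm v c n := funext fun x => hκm x n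
    rw [heq]
    exact measurable_auxm v c hv hc n
  · intro x
    have h1 : v (x, κ x) ≤ auxJ v x := hκS x 0
    exact le_antisymm h1 (auxJ_le v hv x (κ x))
end
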